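/- arXiv:math-ph/0004011 — 2 statements merged into one kernel-verified Lean document; each statement's English description precedes it below -/
import Mathlib

section
/- Let A be a symmetric real n×n matrix (A = Aᵀ) and let c be an antisymmetric real n×n matrix satisfying the cocycle condition c_{ij} + c_{jk} = c_{ik} for all i, j, k. Then the bilinear form W(u, v) = Σ_{j,k} c_{jk} A_{jk} u_j v_k restricted to the kernel of A is antisymmetric: W(u,v) = −W(v,u) for all u, v ∈ ker A; in fact W(u,v) = Σ_{j,k} c_{jk} A_{jk} u_j v_k = Σ_j χ(j) ((Au)_j v_j − u_j (Av)_j) for χ with c_{jk} = χ(k) − χ(j), which vanishes term-by-term appropriately on ker A. -/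
/-- the symplectic Wronskian.  Let `A` be a symmetric real `n × n` matrix
and `c` an antisymmetric matrix satisfying the cocycle condition `c i j + c j k = c i k`.
Then for any `χ` with `c j k = χ k − χ j`, the bilinear form
`W(u,v) = Σ_{j,k} c j k * A j k * u j * v k` satisfies
`W(u,v) = Σ_j χ j * ((Au)_j v_j − u_j (Av)_j)`, and on `ker A` it is antisymmetric:
`W(u,v) = −W(v,u)`. -/
theorem symplectic_wronskian {n : ℕ} (A : Matrix (Fin n) (Fin n) ℝ) (hA : A.IsSymm)
    (c : Fin n → Fin n → ℝ)
    (hanti : ∀ j k, c j k = -(c k j))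
    (hco : ∀ i j k, c i j + c j k = c i k)
    (χ : Fin n → ℝ) (hχ : ∀ j k, c j k = χ k - χ j) :
    (∀ u v : Fin n → ℝ,
      ∑ j, ∑ k, c j k * A j k * u j * v k =
        ∑ j, χ j * ((A.mulVec u) j * v j - u j * (A.mulVec v) j)) ∧
    (∀ u v : Fin n → ℝ, A.mulVec u = 0 → A.mulVec v = 0 →
      ∑ j, ∑ k, c j k * A j k * u j * v k =
        -(∑ j, ∑ k, c j k * A j k * v j * u k)) := by

  have key : ∀ u v : Fin n → ℝ,
      ∑ j, ∑ k, c j k * A j k * u j * v k =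
        ∑ j, χ j * ((A.mulVec u) j * v j - u j * (A.mulVec v) j) := by
    intro u v
    have hsym : ∀ j k, A k j = A j k := by
      intro j k
      have := hA
      rw [Matrix.IsSymm] at this
      calc A k j = A.transpose j k := rfl
        _ = A j k := by rw [this]
    calc ∑ j, ∑ k, c j k * A j k * u j * v k
        = ∑ j, ∑ k, (χ k * (A j k * u j * v k) - χ j * (A j k * u j * v k)) := by
          apply Finset.sum_congr rfl; intro j _
          apply Finset.sum_congr rfl; intro k _
          rw [hχ]; ring
      _ = (∑ j, ∑ k, χ k * (A j k * u j * v k)) - ∑ j, ∑ k, χ j * (A j k * u j * v k) := by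
          rw [← Finset.sum_sub_distrib]
          apply Finset.sum_congr rfl; intro j _
          rw [← Finset.sum_sub_distrib]
      _ = (∑ j, χ j * ((A.mulVec u) j * v j)) - ∑ j, χ j * (u j * (A.mulVec v) j) := by
          congr 1
          · rw [Finset.sum_comm]
            apply Finset.sum_congr rfl; intro j _
            simp only [Matrix.mulVec, dotProduct]
            rw [Finset.sum_mul, Finset.mul_sum]
            apply Finset.sum_congr rfl; intro k _
            rw [hsym j k]
          · apply Finset.sum_congr rfl; intro j _
            simp only [Matrix.mulVec, dotProduct]
            rw [Finset.mul_sum, Finset.mul_sum]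
            apply Finset.sum_congr rfl; intro k _
            ring
      _ = ∑ j, χ j * ((A.mulVec u) j * v j - u j * (A.mulVec v) j) := by
          rw [← Finset.sum_sub_distrib]
          apply Finset.sum_congr rfl; intro j _
          ring
  refine ⟨key, ?_⟩
  intro u v hu hv
  rw [key u v, key v u, hu, hv]
  simp
end

section
/- Let Γ be a graph obtained from a finite graph by attaching finitely many half-infinite tails (rays). Then H_1^{open}(Γ;ℝ), the space of locally finite 1-cycles of Γ, has dimension equal to b + t − 1 if t ≥ 1 (where b is the first Betti number of the finite part and t the number of tails), with the tail contributions generated by chains that are constant 1 along one tail and −1 along another. -/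
set_option maxHeartbeats 1000000
set_option synthInstance.maxHeartbeats 1000000


open SimpleGraph

variable {V : Type*} [Fintype V] [DecidableEq V]

/-- The graph obtained from a finite graph `G` by attaching `t` half-infinite tails (rays),
the `i`-th tail being attached at the vertex `a i`.  The vertices of the `i`-th tail are the
pairs `(i, n)`, `n : ℕ`, with `(i, 0)` joined to `a i` and `(i, n)` joined to `(i, n+1)`. -/
def tailGraph (G : SimpleGraph V) (t : ℕ) (a : Fin t → V) :
    SimpleGraph (V ⊕ Fin t × ℕ) where
  Adj x y := match x, y with
    | .inl u, .inl v => G.Adj u v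
    | .inl u, .inr (i, n) => n = 0 ∧ u = a i
    | .inr (i, n), .inl u => n = 0 ∧ u = a i
    | .inr (i, n), .inr (j, m) => i = j ∧ (m = n + 1 ∨ n = m + 1)
  symm := by
    constructor
    rintro (u | ⟨i, n⟩) (v | ⟨j, m⟩) h
    · exact G.adj_symm h
    · exact h
    · exact h
    · exact ⟨h.1.symm, h.2.symm⟩
  loopless := by
    constructor
    rintro (u | ⟨i, n⟩) h
    · exact G.irrefl h
    · rcases h.2 with h2 | h2 <;> omega

/-- The space of locally finite real 1-cycles of the graph `tailGraph G t a`, i.e.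
`H₁^{open} = ker ∂` on locally finite 1-chains (there are no 2-chains on a graph).
A 1-chain consists of: an antisymmetric function `c.1` on the darts of the finite part `G`;
coefficients `c.2.1 i` on the attaching edge from `a i` to the tail vertex `(i,0)`; and
coefficients `c.2.2 (i, n)` on the tail edge from `(i, n)` to `(i, n+1)`.  The cycle
condition is the vanishing of the boundary at every vertex. -/
def tailCycleSpace (G : SimpleGraph V) [DecidableRel G.Adj] (t : ℕ) (a : Fin t → V) :
    Submodule ℝ ((G.Dart → ℝ) × (Fin t → ℝ) × (Fin t × ℕ → ℝ)) where
  carrier := {c |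
    (∀ d : G.Dart, c.1 d.symm = -c.1 d) ∧
    (∀ v : V, (∑ d : G.Dart, if d.toProd.2 = v then c.1 d else 0)
      - (∑ i : Fin t, if a i = v then c.2.1 i else 0) = 0) ∧
    (∀ i : Fin t, c.2.1 i - c.2.2 (i, 0) = 0) ∧
    (∀ i : Fin t, ∀ n : ℕ, c.2.2 (i, n) - c.2.2 (i, n + 1) = 0)}
  zero_mem' := by
    refine ⟨fun d => by simp, fun v => by simp, fun i => by simp, fun i n => by simp⟩
  add_mem' := by
    rintro x y ⟨hx1, hx2, hx3, hx4⟩ ⟨hy1, hy2, hy3, hy4⟩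
    refine ⟨fun d => ?_, fun v => ?_, fun i => ?_, fun i n => ?_⟩
    · simp only [Prod.fst_add, Pi.add_apply, hx1 d, hy1 d]; ring
    · have e1 : ∀ d : G.Dart, (if d.toProd.2 = v then (x.1 + y.1) d else 0) =
          (if d.toProd.2 = v then x.1 d else 0) + (if d.toProd.2 = v then y.1 d else 0) := by
        intro d; by_cases h : d.toProd.2 = v <;> simp [h]
      have e2 : ∀ i : Fin t, (if a i = v then (x.2.1 + y.2.1) i else 0) =
          (if a i = v then x.2.1 i else 0) + (if a i = v then y.2.1 i else 0) := by
        intro i; by_cases h : a i = v <;> simp [h]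
      have h1 := hx2 v
      have h2 := hy2 v
      simp only [Prod.fst_add, Prod.snd_add]
      rw [Finset.sum_congr rfl (fun d _ => e1 d), Finset.sum_congr rfl (fun i _ => e2 i),
        Finset.sum_add_distrib, Finset.sum_add_distrib]
      linarith
    · have h1 := hx3 i; have h2 := hy3 i
      simp only [Prod.snd_add, Prod.fst_add, Pi.add_apply]
      linarith
    · have h1 := hx4 i n; have h2 := hy4 i n
      simp only [Prod.snd_add, Pi.add_apply]
      linarith
  smul_mem' := by
    rintro r x ⟨hx1, hx2, hx3, hx4⟩
    refine ⟨fun d => ?_, fun v => ?_, fun i => ?_, fun i n => ?_⟩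
    · simp only [Prod.smul_fst, Pi.smul_apply, smul_eq_mul, hx1 d]; ring
    · have e1 : ∀ d : G.Dart, (if d.toProd.2 = v then (r • x.1) d else 0) =
          r * (if d.toProd.2 = v then x.1 d else 0) := by
        intro d; by_cases h : d.toProd.2 = v <;> simp [h]
      have e2 : ∀ i : Fin t, (if a i = v then (r • x.2.1) i else 0) =
          r * (if a i = v then x.2.1 i else 0) := by
        intro i; by_cases h : a i = v <;> simp [h]
      have h1 := hx2 v
      simp only [Prod.smul_fst, Prod.smul_snd]
      rw [Finset.sum_congr rfl (fun d _ => e1 d), Finset.sum_congr rfl (fun i _ => e2 i),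
        ← Finset.mul_sum, ← Finset.mul_sum]
      linear_combination r * h1
    · have h1 := hx3 i
      simp only [Prod.smul_snd, Prod.smul_fst, Pi.smul_apply, smul_eq_mul]
      linear_combination r * h1
    · have h1 := hx4 i n
      simp only [Prod.smul_snd, Pi.smul_apply, smul_eq_mul]
      linear_combination r * h1

namespace TailAux

open Finset

variable (G : SimpleGraph V) [DecidableRel G.Adj]

/-- The space of antisymmetric functions on darts (the real edge space). -/
def edgeSpace : Submodule ℝ (G.Dart → ℝ) where
  carrier := {f | ∀ d : G.Dart, f d.symm = - f d}
  zero_mem' := by intro d; simp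
  add_mem' := by
    intro f g hf hg d
    simp only [Pi.add_apply, hf d, hg d]; ring
  smul_mem' := by
    intro r f hf d
    simp only [Pi.smul_apply, smul_eq_mul, hf d]; ring

/-- The boundary map on 1-chains. -/
def bdry : (G.Dart → ℝ) →ₗ[ℝ] (V → ℝ) where
  toFun f := fun v => ∑ d ∈ Finset.univ.filter (fun d : G.Dart => d.toProd.2 = v), f d
  map_add' f g := funext fun v => Finset.sum_add_distrib
  map_smul' r f := funext fun v => by
    simp [Finset.mul_sum]

lemma bdry_eq (f : G.Dart → ℝ) (v : V) :
    bdry G f v = ∑ d : G.Dart, if d.toProd.2 = v then f d else 0 := by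
  rw [show bdry G f v
      = ∑ d ∈ Finset.univ.filter (fun d : G.Dart => d.toProd.2 = v), f d from rfl,
    Finset.sum_filter]

/-- The attachment map sending tail coefficients to vertex functions. -/
def att (t : ℕ) (a : Fin t → V) : (Fin t → ℝ) →ₗ[ℝ] (V → ℝ) where
  toFun x := fun v => ∑ i ∈ Finset.univ.filter (fun i : Fin t => a i = v), x i
  map_add' x y := funext fun v => Finset.sum_add_distrib
  map_smul' r x := funext fun v => by
    simp [Finset.mul_sum]

lemma att_eq (t : ℕ) (a : Fin t → V) (x : Fin t → ℝ) (v : V) :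
    att t a x v = ∑ i : Fin t, if a i = v then x i else 0 := by
  rw [show att t a x v
      = ∑ i ∈ Finset.univ.filter (fun i : Fin t => a i = v), x i from rfl,
    Finset.sum_filter]

variable {G}

lemma sum_fin_ite (t : ℕ) (a : Fin t → V) (v : V) (i : Fin t) (r : ℝ) :
    (∑ k : Fin t, if a k = v then (if k = i then r else 0) else 0)
      = if a i = v then r else 0 := by
  have h : ∀ k : Fin t, (if a k = v then (if k = i then r else 0) else 0)
      = if k = i then (if a i = v then r else 0) else 0 := by
    intro k
    by_cases hk : k = i
    · subst hk; simp
    · simp [hk]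
  rw [Finset.sum_congr rfl (fun k _ => h k), Finset.sum_ite_eq' Finset.univ i
    (fun _ => if a i = v then r else 0), if_pos (Finset.mem_univ i)]

lemma att_single (t : ℕ) (a : Fin t → V) (i : Fin t) :
    att t a (Pi.single i (1 : ℝ)) = Pi.single (a i) 1 := by
  funext v
  rw [att_eq]
  have h : ∀ k : Fin t, (if a k = v then (Pi.single i (1:ℝ) : Fin t → ℝ) k else 0)
      = if a k = v then (if k = i then (1:ℝ) else 0) else 0 := by
    intro k; rw [Pi.single_apply]
  rw [Finset.sum_congr rfl (fun k _ => h k), sum_fin_ite t a v i 1, Pi.single_apply]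
  by_cases hh : a i = v
  · simp [hh]
  · simp [hh, Ne.symm hh]

/-- The elementary 1-chain supported on an edge. -/
def chainOf {u w : V} (_ : G.Adj u w) : G.Dart → ℝ :=
  fun d => if d.toProd = (u, w) then 1 else if d.toProd = (w, u) then -1 else 0

lemma chainOf_mem {u w : V} (h : G.Adj u w) : chainOf h ∈ edgeSpace G := by
  intro d
  obtain ⟨⟨x, y⟩, hd⟩ := d
  have hne : u ≠ w := h.ne
  simp only [chainOf, Dart.symm, Prod.swap, Prod.mk.injEq]
  by_cases h1 : x = u <;> by_cases h2 : y = w <;> by_cases h3 : x = w <;>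
    by_cases h4 : y = u <;> simp_all

lemma bdry_chainOf {u w : V} (h : G.Adj u w) :
    bdry G (chainOf h) = Pi.single w 1 - Pi.single u 1 := by
  have hne : u ≠ w := h.ne
  funext v
  rw [Pi.sub_apply, bdry_eq]
  have key : ∀ d : G.Dart, (if d.toProd.2 = v then chainOf h d else 0)
      = (if d = (⟨(u, w), h⟩ : G.Dart) then (if w = v then (1:ℝ) else 0) else 0)
      + (if d = (⟨(w, u), h.symm⟩ : G.Dart) then (if u = v then (-1:ℝ) else 0) else 0) := by
    intro d
    by_cases h1 : d = (⟨(u, w), h⟩ : G.Dart)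
    · subst h1
      have : (⟨(u, w), h⟩ : G.Dart) ≠ ⟨(w, u), h.symm⟩ := by
        simp [Dart.ext_iff, Prod.ext_iff, hne]
      simp [chainOf, this]
    · by_cases h2 : d = (⟨(w, u), h.symm⟩ : G.Dart)
      · subst h2
        simp [chainOf, Prod.ext_iff, hne, Ne.symm hne, h1]
      · have n1 : d.toProd ≠ (u, w) := fun hh => h1 (Dart.ext _ _ hh)
        have n2 : d.toProd ≠ (w, u) := fun hh => h2 (Dart.ext _ _ hh)
        simp [chainOf, n1, n2, h1, h2]
  rw [Finset.sum_congr rfl (fun d _ => key d), Finset.sum_add_distrib,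
    Finset.sum_ite_eq' Finset.univ (⟨(u, w), h⟩ : G.Dart),
    Finset.sum_ite_eq' Finset.univ (⟨(w, u), h.symm⟩ : G.Dart)]
  simp only [Finset.mem_univ, if_true, Pi.single_apply]
  by_cases hw : w = v <;> by_cases hu : u = v <;>
    simp [hw, hu, eq_comm] <;> ring

lemma walk_mem_map {u v : V} (p : G.Walk u v) :
    Pi.single v 1 - Pi.single u 1 ∈ (edgeSpace G).map (bdry G) := by
  induction p with
  | nil => rw [sub_self]; exact zero_mem _
  | @cons x y z h p ih =>
      have h2 : Pi.single y 1 - Pi.single x 1 ∈ (edgeSpace G).map (bdry G) :=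
        ⟨chainOf h, chainOf_mem h, bdry_chainOf h⟩
      have := add_mem ih h2
      rwa [sub_add_sub_cancel] at this

/-- The combined boundary map for the tailed graph. -/
noncomputable def LMap (t : ℕ) (a : Fin t → V) : (↥(edgeSpace G) × (Fin t → ℝ)) →ₗ[ℝ] (V → ℝ) :=
  (bdry G).comp ((edgeSpace G).subtype.comp (LinearMap.fst ℝ _ _))
    - (att t a).comp (LinearMap.snd ℝ _ _)

lemma LMap_apply (t : ℕ) (a : Fin t → V) (p : ↥(edgeSpace G) × (Fin t → ℝ)) :
    LMap t a p = bdry G p.1.1 - att t a p.2 := rfl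

lemma range_LMap_top (hG : G.Connected) (t : ℕ) (ht : 1 ≤ t) (a : Fin t → V) :
    LinearMap.range (LMap (G := G) t a) = ⊤ := by
  set i₀ : Fin t := ⟨0, ht⟩ with hi₀
  have hA : Pi.single (a i₀) (1 : ℝ) ∈ LinearMap.range (LMap (G := G) t a) := by
    refine ⟨(0, -Pi.single i₀ 1), ?_⟩
    rw [LMap_apply]
    simp [att_single]
  have hsingle : ∀ v : V, Pi.single v (1 : ℝ) ∈ LinearMap.range (LMap (G := G) t a) := by
    intro v
    obtain ⟨p⟩ := hG.preconnected (a i₀) v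
    obtain ⟨f, hf, hbf⟩ := walk_mem_map p
    have hmem : Pi.single v 1 - Pi.single (a i₀) 1 ∈ LinearMap.range (LMap (G := G) t a) := by
      refine ⟨(⟨f, hf⟩, 0), ?_⟩
      rw [LMap_apply]
      simp [hbf]
    have := add_mem hmem hA
    rwa [sub_add_cancel] at this
  rw [eq_top_iff]
  rintro g -
  have hg : g = ∑ v : V, Pi.single v (g v) := (Finset.univ_sum_single g).symm
  rw [hg]
  refine sum_mem (fun v _ => ?_)
  have hsm : Pi.single v (g v) = g v • (Pi.single v (1 : ℝ) : V → ℝ) := by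
    funext w
    by_cases hw : w = v <;> simp [Pi.single_apply, hw]
  rw [hsm]
  exact Submodule.smul_mem _ _ (hsingle v)

lemma finrank_edgeSpace : Module.finrank ℝ ↥(edgeSpace G) = G.edgeFinset.card := by
  classical
  let σ := Fintype.equivFin V
  have hσ : ∀ d : G.Dart, σ d.toProd.1 ≠ σ d.toProd.2 := fun d hh => d.adj.ne (σ.injective hh)
  let P := {d : G.Dart // σ d.toProd.1 < σ d.toProd.2}
  let r : ↥(edgeSpace G) →ₗ[ℝ] (P → ℝ) :=
    { toFun := fun f p => f.1 p.1
      map_add' := fun f g => rfl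
      map_smul' := fun c f => rfl }
  have hsymm_pos : ∀ d : G.Dart, ¬ σ d.toProd.1 < σ d.toProd.2 →
      σ d.symm.toProd.1 < σ d.symm.toProd.2 := by
    intro d hd
    have := (lt_or_gt_of_ne (hσ d)).resolve_left hd
    simpa [Dart.symm] using this
  have hinj : Function.Injective r := by
    intro f g hfg
    ext d
    by_cases hd : σ d.toProd.1 < σ d.toProd.2
    · exact congrFun hfg ⟨d, hd⟩
    · have h1 := congrFun hfg ⟨d.symm, hsymm_pos d hd⟩
      have h2 : f.1 d.symm = g.1 d.symm := h1
      have := congrArg Neg.neg h2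
      rwa [← f.2 d.symm, ← g.2 d.symm, Dart.symm_symm] at this
  have hsurj : Function.Surjective r := by
    intro g
    refine ⟨⟨fun d => if hd : σ d.toProd.1 < σ d.toProd.2 then g ⟨d, hd⟩
      else - g ⟨d.symm, hsymm_pos d hd⟩, ?_⟩, ?_⟩
    · intro d
      dsimp only
      by_cases hd : σ d.toProd.1 < σ d.toProd.2
      · have hd' : ¬ σ d.symm.toProd.1 < σ d.symm.toProd.2 := by
          simp only [Dart.symm, Prod.fst_swap, Prod.snd_swap]
          exact fun hh => lt_asymm hd hh
        rw [dif_neg hd', dif_pos hd]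
        congr 1
      · rw [dif_pos (hsymm_pos d hd), dif_neg hd, neg_neg]
    · funext p
      simp only [r, LinearMap.coe_mk, AddHom.coe_mk]
      rw [dif_pos p.2]
  have e := LinearEquiv.ofBijective r ⟨hinj, hsurj⟩
  rw [e.finrank_eq, Module.finrank_fintype_fun_eq_card]
  -- now `Fintype.card P = G.edgeFinset.card`
  have eP : Fintype.card P = G.edgeFinset.card := by
    rw [← Fintype.card_coe G.edgeFinset]
    refine Fintype.card_of_bijective (f := fun p : P =>
      (⟨p.1.edge, by simp [mem_edgeFinset]⟩ : ↥G.edgeFinset)) ⟨?_, ?_⟩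
    · rintro ⟨d₁, h₁⟩ ⟨d₂, h₂⟩ hh
      have : d₁.edge = d₂.edge := congrArg Subtype.val hh
      rcases (dart_edge_eq_iff d₁ d₂).mp this with h | h
      · exact Subtype.ext h
      · exfalso
        subst h
        simp only [Dart.symm, Prod.fst_swap, Prod.snd_swap] at h₁
        exact lt_asymm h₁ h₂
    · rintro ⟨e, he⟩
      rw [mem_edgeFinset] at he
      induction e with
      | _ u w =>
        have hadj : G.Adj u w := he
        rcases lt_or_gt_of_ne (fun hh : σ u = σ w => hadj.ne (σ.injective hh)) with hlt | hgt
        · exact ⟨⟨⟨(u, w), hadj⟩, hlt⟩, rfl⟩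
        · exact ⟨⟨⟨(w, u), hadj.symm⟩, hgt⟩, Subtype.ext (Sym2.eq_swap)⟩
  rw [eP]

lemma rank_ker_LMap (hG : G.Connected) (t : ℕ) (ht : 1 ≤ t) (a : Fin t → V) :
    Module.finrank ℝ ↥(LinearMap.ker (LMap (G := G) t a)) + Fintype.card V
      = G.edgeFinset.card + t := by
  have h1 := LinearMap.finrank_range_add_finrank_ker (LMap (G := G) t a)
  rw [range_LMap_top hG t ht a, finrank_top, Module.finrank_fintype_fun_eq_card,
    Module.finrank_prod, finrank_edgeSpace, Module.finrank_fintype_fun_eq_card,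
    Fintype.card_fin] at h1
  omega

end TailAux

open TailAux in
lemma tail_const {t : ℕ} {a : Fin t → V} (G : SimpleGraph V) [DecidableRel G.Adj]
    {c : (G.Dart → ℝ) × (Fin t → ℝ) × (Fin t × ℕ → ℝ)}
    (hc : c ∈ tailCycleSpace G t a) (i : Fin t) (n : ℕ) : c.2.2 (i, n) = c.2.1 i := by
  induction n with
  | zero => have := hc.2.2.1 i; linarith
  | succ n ih => have := hc.2.2.2 i n; linarith

open TailAux in
lemma tailCycleSpace_finrank_eq (G : SimpleGraph V) [DecidableRel G.Adj]
    (t : ℕ) (a : Fin t → V) :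
    Module.finrank ℝ ↥(tailCycleSpace G t a)
      = Module.finrank ℝ ↥(LinearMap.ker (LMap (G := G) t a)) := by
  classical
  let Ψ : ↥(LinearMap.ker (LMap (G := G) t a)) →ₗ[ℝ] ↥(tailCycleSpace G t a) :=
    { toFun := fun p => ⟨((p.1.1 : G.Dart → ℝ), p.1.2, fun q => p.1.2 q.1), by
        obtain ⟨⟨f, x⟩, hp⟩ := p
        have hp' : ∀ v, bdry G f.1 v - att t a x v = 0 := by
          intro v
          have := congrFun (LinearMap.mem_ker.mp hp) v
          rwa [LMap_apply] at this
        refine ⟨f.2, fun v => ?_, fun i => sub_self _, fun i n => sub_self _⟩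
        have := hp' v
        rwa [bdry_eq, att_eq] at this⟩
      map_add' := fun p q => rfl
      map_smul' := fun c p => rfl }
  have hinj : Function.Injective Ψ := by
    rintro ⟨⟨f, x⟩, hp⟩ ⟨⟨g, y⟩, hq⟩ hh
    have hval := congrArg Subtype.val hh
    have h1 : (f : G.Dart → ℝ) = g := congrArg Prod.fst hval
    have h2 : x = y := congrArg (fun z => z.2.1) hval
    exact Subtype.ext (Prod.ext (Subtype.ext h1) h2)
  have hsurj : Function.Surjective Ψ := by
    rintro ⟨⟨f, x, y⟩, hc⟩
    refine ⟨⟨(⟨f, hc.1⟩, x), ?_⟩, ?_⟩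
    · rw [LinearMap.mem_ker]
      funext v
      rw [LMap_apply]
      have := hc.2.1 v
      rw [← bdry_eq, ← att_eq] at this
      simpa using this
    · refine Subtype.ext (Prod.ext rfl (Prod.ext rfl ?_))
      funext q
      exact (tail_const G hc q.1 q.2).symm
  exact (LinearEquiv.ofBijective Ψ ⟨hinj, hsurj⟩).finrank_eq.symm

/-- Let `Γ` be obtained from a finite connected graph `G` (first Betti
number `b = E − V + 1`) by attaching `t ≥ 1` half-infinite tails.  Then `H₁^{open}(Γ;ℝ)`,
the space of locally finite 1-cycles of `Γ`, has dimension `b + t − 1`, and the tail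
contributions are generated by cycles that are constantly `1` along one tail, constantly `−1`
along another, and `0` along all remaining tails. -/
theorem tailGraph_H1_open_rank (G : SimpleGraph V) [DecidableRel G.Adj]
    (hG : G.Connected) (t : ℕ) (ht : 1 ≤ t) (a : Fin t → V) :
    Module.finrank ℝ (tailCycleSpace G t a) =
      (G.edgeFinset.card + 1 - Fintype.card V) + t - 1 ∧
    ∀ i j : Fin t, i ≠ j → ∃ c ∈ tailCycleSpace G t a,
      (∀ n : ℕ, c.2.2 (i, n) = 1) ∧ (∀ n : ℕ, c.2.2 (j, n) = -1) ∧
      (∀ k : Fin t, k ≠ i → k ≠ j → ∀ n : ℕ, c.2.2 (k, n) = 0) := by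
  classical
  constructor
  · have h1 := TailAux.rank_ker_LMap (G := G) hG t ht a
    have h2 := TailAux.rank_ker_LMap (G := G) hG 1 le_rfl (fun _ => a ⟨0, ht⟩)
    rw [tailCycleSpace_finrank_eq G t a]
    omega
  · intro i j hij
    obtain ⟨p⟩ := hG.preconnected (a j) (a i)
    obtain ⟨f, hf, hbf⟩ := TailAux.walk_mem_map p
    set x : Fin t → ℝ := fun k => (if k = i then 1 else 0) - (if k = j then 1 else 0) with hx
    refine ⟨(f, x, fun q => x q.1), ⟨hf, fun v => ?_, fun k => sub_self _,
      fun k n => sub_self _⟩, fun n => ?_, fun n => ?_, fun k hki hkj n => ?_⟩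
    · have hb : (∑ d : G.Dart, if d.toProd.2 = v then f d else 0)
          = (Pi.single (a i) 1 : V → ℝ) v - (Pi.single (a j) 1 : V → ℝ) v := by
        rw [← TailAux.bdry_eq, hbf, Pi.sub_apply]
      have hs : (∑ k : Fin t, if a k = v then x k else 0)
          = (if a i = v then (1:ℝ) else 0) - (if a j = v then (1:ℝ) else 0) := by
        have : ∀ k : Fin t, (if a k = v then x k else 0)
            = (if a k = v then (if k = i then (1:ℝ) else 0) else 0)
              - (if a k = v then (if k = j then (1:ℝ) else 0) else 0) := by
          intro k
          by_cases h : a k = v <;> simp [h, hx]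
        rw [Finset.sum_congr rfl (fun k _ => this k), Finset.sum_sub_distrib,
          TailAux.sum_fin_ite t a v i 1, TailAux.sum_fin_ite t a v j 1]
      rw [hb, hs, Pi.single_apply, Pi.single_apply]
      by_cases h1 : a i = v
      · by_cases h2 : a j = v
        · simp [h1, h2]
        · simp [h1, h2, Ne.symm h2]
      · by_cases h2 : a j = v
        · simp [h1, h2, Ne.symm h1]
        · simp [h1, h2, Ne.symm h1, Ne.symm h2]
    · simp [hx, hij]
    · simp [hx, hij.symm]
    · simp [hx, hki, hkj]
end
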